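/- Fix a real parameter c. For all natural numbers l₁, l₂, every natural number ν, and all reals x₁ > 0, x₂ > 0, the complementary polynomials of the confluent hypergeometric equation satisfy the full addition law 𝒫_ν(x₁+x₂, l₁+l₂) = Σ_{ν₁,ν₂ ≥ 0, ν₁+ν₂ ≤ ν} C(1−c, ν−ν₁−ν₂)·(ν!/(ν₁!·ν₂!))·𝒫_{ν₁}(x₁,l₁)·𝒫_{ν₂}(x₂,l₂), where C(r,k) = (∏_{i=0}^{k−1}(r−i))/k! is the generalized binomial coefficient. -/

import Mathlib

/-- Complementary polynomial of the confluent hypergeometric equation: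
`𝒫_ν(x,l) = x^(1-c+ν-l) · e^x · (dᵛ/dtᵛ)(t^(c-1+l) e^(-t)) |_{t=x}` (rpow powers). -/
noncomputable def complConfluent (c : ℝ) (l ν : ℕ) (x : ℝ) : ℝ :=
  x ^ (1 - c + (ν : ℝ) - (l : ℝ)) * Real.exp x *
    iteratedDeriv ν (fun t : ℝ => t ^ (c - 1 + (l : ℝ)) * Real.exp (-t)) x

/-- Generalized binomial coefficient `C(r,k) = (∏_{i<k} (r-i)) / k!`. -/
noncomputable def genBinom (r : ℝ) (k : ℕ) : ℝ :=
  (∏ i ∈ Finset.range k, (r - (i : ℝ))) / (Nat.factorial k : ℝ)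

open Finset Real Filter

noncomputable def fall (r : ℝ) (k : ℕ) : ℝ := ∏ i ∈ Finset.range k, (r - (i : ℝ))

@[simp] lemma fall_zero (r : ℝ) : fall r 0 = 1 := by simp [fall]

lemma fall_succ (r : ℝ) (k : ℕ) : fall r (k + 1) = fall r k * (r - k) :=
  Finset.prod_range_succ _ _

lemma smeval_descPochhammer_real (r : ℝ) (k : ℕ) :
    Polynomial.smeval (descPochhammer ℤ k) r = fall r k := by
  induction k with
  | zero => simp [fall, descPochhammer_zero, Polynomial.smeval_one]
  | succ n ih =>
    rw [descPochhammer_succ_right, Polynomial.smeval_mul, ih, fall_succ]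
    congr 1
    rw [Polynomial.smeval_sub, Polynomial.smeval_X, Polynomial.smeval_natCast]
    simp

lemma genBinom_add (r s : ℝ) (k : ℕ) :
    genBinom (r + s) k = ∑ ij ∈ Finset.HasAntidiagonal.antidiagonal k, genBinom r ij.1 * genBinom s ij.2 := by
  have h := Ring.descPochhammer_smeval_add (R := ℝ) (r := r) (s := s) k (Commute.all r s)
  simp only [smeval_descPochhammer_real] at h
  unfold genBinom
  rw [show (∏ i ∈ Finset.range k, (r + s - (i:ℝ))) = fall (r+s) k from rfl, h, Finset.sum_div]
  refine Finset.sum_congr rfl fun ij hij => ?_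
  have hk : ij.1 + ij.2 = k := Finset.HasAntidiagonal.mem_antidiagonal.mp hij
  have h1 : (k.factorial : ℝ) = k.choose ij.1 * ij.1.factorial * ij.2.factorial := by
    have h2 : ij.2 = k - ij.1 := by omega
    have h3 : ij.1 ≤ k := by omega
    rw [h2]
    exact_mod_cast (Nat.choose_mul_factorial_mul_factorial h3).symm
  have hc : (0:ℝ) < k.choose ij.1 := by
    have : ij.1 ≤ k := by omega
    exact_mod_cast Nat.choose_pos this
  have f1 : (ij.1.factorial : ℝ) ≠ 0 := Nat.cast_ne_zero.mpr ij.1.factorial_ne_zero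
  have f2 : (ij.2.factorial : ℝ) ≠ 0 := Nat.cast_ne_zero.mpr ij.2.factorial_ne_zero
  rw [h1]
  field_simp
  unfold fall
  ring

lemma hasDerivAt_rpow_exp (b : ℝ) {x : ℝ} (hx : 0 < x) :
    HasDerivAt (fun t : ℝ => t ^ b * Real.exp (-t))
      (b * x ^ (b - 1) * Real.exp (-x) - x ^ b * Real.exp (-x)) x := by
  have h1 : HasDerivAt (fun t : ℝ => t ^ b) (b * x ^ (b - 1)) x :=
    Real.hasDerivAt_rpow_const (Or.inl hx.ne')
  have h2 : HasDerivAt (fun t : ℝ => Real.exp (-t)) (-Real.exp (-x)) x := by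
    simpa using (hasDerivAt_neg x).exp
  have : HasDerivAt (fun t : ℝ => t ^ b * Real.exp (-t))
      (b * x ^ (b - 1) * Real.exp (-x) + x ^ b * -Real.exp (-x)) x := h1.mul h2
  convert this using 1
  ring

lemma iteratedDeriv_rpow_exp (a : ℝ) (ν : ℕ) :
    ∀ x : ℝ, 0 < x →
      iteratedDeriv ν (fun t : ℝ => t ^ a * Real.exp (-t)) x
        = ∑ k ∈ Finset.range (ν + 1),
            (ν.choose k : ℝ) * fall a k * (-1 : ℝ) ^ (ν - k) * (x ^ (a - k) * Real.exp (-x)) := by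
  induction ν with
  | zero => intro x hx; simp
  | succ ν ih =>
    intro x hx
    rw [iteratedDeriv_succ]
    have hev : iteratedDeriv ν (fun t : ℝ => t ^ a * Real.exp (-t))
        =ᶠ[nhds x] fun t => ∑ k ∈ Finset.range (ν + 1),
            (ν.choose k : ℝ) * fall a k * (-1 : ℝ) ^ (ν - k) * (t ^ (a - k) * Real.exp (-t)) := by
      filter_upwards [Ioi_mem_nhds hx] with t ht
      exact ih t ht
    rw [hev.deriv_eq]
    have hd : HasDerivAt (fun t => ∑ k ∈ Finset.range (ν + 1),
          (ν.choose k : ℝ) * fall a k * (-1 : ℝ) ^ (ν - k) * (t ^ (a - k) * Real.exp (-t)))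
        (∑ k ∈ Finset.range (ν + 1),
          (ν.choose k : ℝ) * fall a k * (-1 : ℝ) ^ (ν - k) *
            ((a - k) * x ^ (a - k - 1) * Real.exp (-x) - x ^ (a - k) * Real.exp (-x))) x := by
      apply HasDerivAt.fun_sum
      intro k _
      exact (hasDerivAt_rpow_exp (a - k) hx).const_mul _
    rw [hd.deriv]
    have key : ∀ k, (ν.choose k : ℝ) * fall a k * (-1 : ℝ) ^ (ν - k) *
            ((a - k) * x ^ (a - k - 1) * Real.exp (-x) - x ^ (a - k) * Real.exp (-x))
        = (ν.choose k : ℝ) * fall a (k+1) * (-1 : ℝ) ^ (ν - k) * (x ^ (a - (k+1:ℕ)) * Real.exp (-x))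
          - (ν.choose k : ℝ) * fall a k * (-1 : ℝ) ^ (ν - k) * (x ^ (a - k) * Real.exp (-x)) := by
      intro k
      rw [fall_succ]
      have : a - (k:ℝ) - 1 = a - ((k+1:ℕ):ℝ) := by push_cast; ring
      rw [this]
      ring
    simp only [key, Finset.sum_sub_distrib]
    rw [Finset.sum_range_succ' (fun j => ((ν+1).choose j : ℝ) * fall a j * (-1:ℝ)^(ν+1-j) * (x ^ (a - (j:ℕ)) * Real.exp (-x))) (ν+1)]
    have pascal : ∀ j, (((ν+1).choose (j+1) : ℕ) : ℝ) = (ν.choose j : ℝ) + (ν.choose (j+1) : ℝ) := by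
      intro j; rw [Nat.choose_succ_succ]; push_cast; ring
    have split : ∀ j ∈ Finset.range (ν+1),
        ((ν+1).choose (j+1) : ℝ) * fall a (j+1) * (-1:ℝ)^(ν+1-(j+1)) * (x ^ (a - ((j+1:ℕ):ℝ)) * Real.exp (-x))
        = (ν.choose j : ℝ) * fall a (j+1) * (-1:ℝ)^(ν-j) * (x ^ (a - ((j+1:ℕ):ℝ)) * Real.exp (-x))
          + (ν.choose (j+1) : ℝ) * fall a (j+1) * (-1:ℝ)^(ν-j) * (x ^ (a - ((j+1:ℕ):ℝ)) * Real.exp (-x)) := by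
      intro j hj
      have : ν + 1 - (j+1) = ν - j := by omega
      rw [this, pascal]
      ring
    rw [Finset.sum_congr rfl split, Finset.sum_add_distrib]
    have hS2 : ∑ j ∈ Finset.range (ν+1), (ν.choose (j+1):ℝ) * fall a (j+1) * (-1:ℝ)^(ν-j) * (x ^ (a - ((j+1:ℕ):ℝ)) * Real.exp (-x))
        = ∑ j ∈ Finset.range ν, (ν.choose (j+1):ℝ) * fall a (j+1) * (-1:ℝ)^(ν-j) * (x ^ (a - ((j+1:ℕ):ℝ)) * Real.exp (-x)) := by
      rw [Finset.sum_range_succ, Nat.choose_succ_self]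
      simp
    have hT : ∑ k ∈ Finset.range (ν+1), (ν.choose k:ℝ) * fall a k * (-1:ℝ)^(ν-k) * (x ^ (a - (k:ℝ)) * Real.exp (-x))
        = ∑ j ∈ Finset.range ν, (ν.choose (j+1):ℝ) * fall a (j+1) * (-1:ℝ)^(ν-(j+1)) * (x ^ (a - ((j+1:ℕ):ℝ)) * Real.exp (-x))
          + (ν.choose 0:ℝ) * fall a 0 * (-1:ℝ)^(ν-0) * (x ^ (a - ((0:ℕ):ℝ)) * Real.exp (-x)) :=
      Finset.sum_range_succ' _ ν
    rw [hS2, hT]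
    have flip : ∀ j ∈ Finset.range ν, (ν.choose (j+1):ℝ) * fall a (j+1) * (-1:ℝ)^(ν-j) * (x ^ (a - ((j+1:ℕ):ℝ)) * Real.exp (-x))
        = -((ν.choose (j+1):ℝ) * fall a (j+1) * (-1:ℝ)^(ν-(j+1)) * (x ^ (a - ((j+1:ℕ):ℝ)) * Real.exp (-x))) := by
      intro j hj
      have hj' : j < ν := Finset.mem_range.mp hj
      have h2 : ν - j = (ν - (j+1)) + 1 := by omega
      rw [h2, pow_succ]
      ring
    rw [Finset.sum_congr rfl flip, Finset.sum_neg_distrib]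
    have hlast : (((ν+1).choose 0 : ℕ):ℝ) * fall a 0 * (-1:ℝ)^(ν+1-0) * (x ^ (a - ((0:ℕ):ℝ)) * Real.exp (-x))
        = -((ν.choose 0:ℝ) * fall a 0 * (-1:ℝ)^(ν-0) * (x ^ (a - ((0:ℕ):ℝ)) * Real.exp (-x))) := by
      simp [pow_succ]
    rw [hlast]
    ring

/-- The complementary polynomial, in closed polynomial form. -/
noncomputable def pp (A : ℝ) (ν : ℕ) (x : ℝ) : ℝ :=
  ∑ k ∈ Finset.range (ν + 1), (ν.choose k : ℝ) * fall A k * (-1 : ℝ) ^ (ν - k) * x ^ (ν - k)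

lemma complConfluent_eq (c : ℝ) (l ν : ℕ) {x : ℝ} (hx : 0 < x) :
    complConfluent c l ν x = pp (c - 1 + l) ν x := by
  unfold complConfluent pp
  rw [iteratedDeriv_rpow_exp _ _ x hx, Finset.mul_sum]
  refine Finset.sum_congr rfl fun k hk => ?_
  have hk' : k ≤ ν := by have := Finset.mem_range.mp hk; omega
  have hexp : Real.exp x * Real.exp (-x) = 1 := by rw [← Real.exp_add]; simp
  have hpow : x ^ (1 - c + (ν:ℝ) - (l:ℝ)) * x ^ (c - 1 + (l:ℝ) - (k:ℝ)) = x ^ (((ν - k : ℕ)):ℝ) := by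
    rw [← Real.rpow_add hx]
    congr 1
    push_cast [Nat.cast_sub hk']
    ring
  calc x ^ (1 - c + (ν:ℝ) - (l:ℝ)) * Real.exp x *
        ((ν.choose k : ℝ) * fall (c - 1 + l) k * (-1:ℝ)^(ν-k) * (x ^ (c - 1 + (l:ℝ) - (k:ℝ)) * Real.exp (-x)))
      = (ν.choose k : ℝ) * fall (c - 1 + l) k * (-1:ℝ)^(ν-k) *
        ((x ^ (1 - c + (ν:ℝ) - (l:ℝ)) * x ^ (c - 1 + (l:ℝ) - (k:ℝ))) * (Real.exp x * Real.exp (-x))) := by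
        ring
    _ = (ν.choose k : ℝ) * fall (c - 1 + l) k * (-1:ℝ)^(ν-k) * x ^ (ν - k) := by
        rw [hpow, hexp, mul_one, Real.rpow_natCast]

noncomputable def bs (A : ℝ) : PowerSeries ℝ := PowerSeries.mk fun n => genBinom A n
noncomputable def es (x : ℝ) : PowerSeries ℝ := PowerSeries.mk fun n => (-x) ^ n / n.factorial
noncomputable def ps (A x : ℝ) : PowerSeries ℝ := PowerSeries.mk fun n => pp A n x / n.factorial

lemma factorial_split {k n : ℕ} (h : k ≤ n) :
    (n.factorial : ℝ) = n.choose k * k.factorial * (n - k).factorial := by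
  exact_mod_cast (Nat.choose_mul_factorial_mul_factorial h).symm

lemma ps_eq (A x : ℝ) : ps A x = bs A * es x := by
  ext n
  rw [ps, bs, es, PowerSeries.coeff_mk, PowerSeries.coeff_mul]
  simp only [PowerSeries.coeff_mk]
  rw [Finset.Nat.sum_antidiagonal_eq_sum_range_succ_mk, pp, Finset.sum_div]
  refine Finset.sum_congr rfl fun k hk => ?_
  have hk' : k ≤ n := by have := Finset.mem_range.mp hk; omega
  have hfac := factorial_split hk'
  have f0 : (n.factorial : ℝ) ≠ 0 := Nat.cast_ne_zero.mpr n.factorial_ne_zero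
  have f1 : (k.factorial : ℝ) ≠ 0 := Nat.cast_ne_zero.mpr k.factorial_ne_zero
  have f2 : ((n-k).factorial : ℝ) ≠ 0 := Nat.cast_ne_zero.mpr (n-k).factorial_ne_zero
  have hc : ((n.choose k : ℕ) : ℝ) ≠ 0 := by
    have : 0 < n.choose k := Nat.choose_pos hk'
    positivity
  rw [genBinom, hfac,
    show (∏ i ∈ Finset.range k, (A - (i:ℝ))) = fall A k from rfl,
    show ((-x:ℝ)) ^ (n-k) = (-1:ℝ)^(n-k) * x^(n-k) by rw [neg_pow]]
  field_simp

lemma es_mul (x₁ x₂ : ℝ) : es x₁ * es x₂ = es (x₁ + x₂) := by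
  ext n
  rw [es, es, es, PowerSeries.coeff_mul]
  simp only [PowerSeries.coeff_mk]
  rw [Finset.Nat.sum_antidiagonal_eq_sum_range_succ_mk]
  rw [show (-(x₁ + x₂)) = (-x₁) + (-x₂) by ring, add_pow, Finset.sum_div]
  refine Finset.sum_congr rfl fun k hk => ?_
  have hk' : k ≤ n := by have := Finset.mem_range.mp hk; omega
  have hfac := factorial_split hk'
  have f1 : (k.factorial : ℝ) ≠ 0 := Nat.cast_ne_zero.mpr k.factorial_ne_zero
  have f2 : ((n-k).factorial : ℝ) ≠ 0 := Nat.cast_ne_zero.mpr (n-k).factorial_ne_zero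
  have hc : ((n.choose k : ℕ) : ℝ) ≠ 0 := by
    have : 0 < n.choose k := Nat.choose_pos hk'
    positivity
  rw [hfac]
  field_simp

lemma bs_mul (A B : ℝ) : bs A * bs B = bs (A + B) := by
  ext n
  rw [bs, bs, bs, PowerSeries.coeff_mul]
  simp only [PowerSeries.coeff_mk]
  exact (genBinom_add A B n).symm

lemma ps_main (A₁ A₂ B : ℝ) (x₁ x₂ : ℝ) :
    ps (A₁ + A₂ + B) (x₁ + x₂) = bs B * (ps A₁ x₁ * ps A₂ x₂) := by
  rw [ps_eq, ps_eq, ps_eq, show A₁ + A₂ + B = A₁ + (A₂ + B) by ring, ← bs_mul, ← bs_mul, ← es_mul]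
  ring

lemma sum_triangle_reindex (n : ℕ) (f : ℕ → ℕ → ℝ) :
    ∑ i ∈ Finset.range (n+1), ∑ k ∈ Finset.range (n+1-i), f i k
      = ∑ i ∈ Finset.range (n+1), ∑ k ∈ Finset.range (n+1-i), f (n-i-k) i := by
  rw [Finset.sum_sigma', Finset.sum_sigma']
  refine Finset.sum_nbij' (fun p => ⟨p.2, n - p.1 - p.2⟩) (fun p => ⟨n - p.1 - p.2, p.1⟩)
    ?_ ?_ ?_ ?_ ?_
  · intro p hp
    simp only [Finset.mem_sigma, Finset.mem_range] at hp ⊢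
    omega
  · intro p hp
    simp only [Finset.mem_sigma, Finset.mem_range] at hp ⊢
    omega
  · intro p hp
    simp only [Finset.mem_sigma, Finset.mem_range] at hp
    ext <;> simp <;> omega
  · intro p hp
    simp only [Finset.mem_sigma, Finset.mem_range] at hp
    ext <;> simp <;> omega
  · intro p hp
    simp only [Finset.mem_sigma, Finset.mem_range] at hp
    have : n - p.2 - (n - p.1 - p.2) = p.1 := by omega
    simp [this]

theorem complConfluent_full_addition (c : ℝ) (l₁ l₂ ν : ℕ) (x₁ x₂ : ℝ) (hx₁ : 0 < x₁)
    (hx₂ : 0 < x₂) :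
    complConfluent c (l₁ + l₂) ν (x₁ + x₂)
      = ∑ ν₁ ∈ Finset.range (ν + 1), ∑ ν₂ ∈ Finset.range (ν + 1 - ν₁),
          genBinom (1 - c) (ν - ν₁ - ν₂)
            * ((Nat.factorial ν : ℝ) / ((Nat.factorial ν₁ : ℝ) * (Nat.factorial ν₂ : ℝ)))
            * complConfluent c l₁ ν₁ x₁ * complConfluent c l₂ ν₂ x₂ := by
  rw [complConfluent_eq c (l₁+l₂) ν (add_pos hx₁ hx₂)]
  have hA : c - 1 + ((l₁ + l₂ : ℕ) : ℝ) = (c - 1 + l₁) + (c - 1 + l₂) + (1 - c) := by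
    push_cast; ring
  rw [hA]
  set A₁ := c - 1 + (l₁ : ℝ)
  set A₂ := c - 1 + (l₂ : ℝ)
  set B := 1 - c
  -- coefficient identity from power series
  have h := congrArg (PowerSeries.coeff ν) (ps_main A₁ A₂ B x₁ x₂)
  rw [ps, PowerSeries.coeff_mk, PowerSeries.coeff_mul] at h
  simp only [bs, PowerSeries.coeff_mk, PowerSeries.coeff_mul, ps] at h
  rw [Finset.Nat.sum_antidiagonal_eq_sum_range_succ_mk] at h
  have h2 : pp (A₁ + A₂ + B) ν (x₁ + x₂)
      = (ν.factorial : ℝ) * ∑ i ∈ Finset.range (ν+1), genBinom B i *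
          ∑ k ∈ Finset.range (ν+1-i), pp A₁ k x₁ / k.factorial * (pp A₂ (ν-i-k) x₂ / (ν-i-k).factorial) := by
    have f0 : (ν.factorial : ℝ) ≠ 0 := Nat.cast_ne_zero.mpr ν.factorial_ne_zero
    have e : (∑ k ∈ Finset.range ν.succ,
          genBinom B (k, ν - k).1 *
            ∑ x ∈ Finset.HasAntidiagonal.antidiagonal (k, ν - k).2,
              pp A₁ x.1 x₁ / x.1.factorial * (pp A₂ x.2 x₂ / x.2.factorial))
        = ∑ i ∈ Finset.range (ν+1), genBinom B i *
            ∑ k ∈ Finset.range (ν+1-i), pp A₁ k x₁ / k.factorial * (pp A₂ (ν-i-k) x₂ / (ν-i-k).factorial) := by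
      refine Finset.sum_congr rfl fun i hi => ?_
      congr 1
      rw [Finset.Nat.sum_antidiagonal_eq_sum_range_succ_mk]
      simp only [Prod.fst, Prod.snd]
      have : (ν - i).succ = ν + 1 - i := by have := Finset.mem_range.mp hi; omega
      rw [this]
    rw [e] at h
    rw [← h]
    field_simp
  rw [h2, Finset.mul_sum]
  -- reindex the triangular sum
  have h3 : ∑ i ∈ Finset.range (ν+1), (ν.factorial : ℝ) * (genBinom B i *
        ∑ k ∈ Finset.range (ν+1-i), pp A₁ k x₁ / k.factorial * (pp A₂ (ν-i-k) x₂ / (ν-i-k).factorial))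
      = ∑ i ∈ Finset.range (ν+1), ∑ k ∈ Finset.range (ν+1-i),
          (ν.factorial : ℝ) * genBinom B i * (pp A₁ k x₁ / k.factorial) * (pp A₂ (ν-i-k) x₂ / (ν-i-k).factorial) := by
    refine Finset.sum_congr rfl fun i hi => ?_
    simp only [Finset.mul_sum]
    exact Finset.sum_congr rfl fun k _ => by ring
  rw [h3, sum_triangle_reindex ν (fun i k =>
      (ν.factorial : ℝ) * genBinom B i * (pp A₁ k x₁ / k.factorial) * (pp A₂ (ν-i-k) x₂ / (ν-i-k).factorial))]
  refine Finset.sum_congr rfl fun ν₁ h₁ => Finset.sum_congr rfl fun ν₂ h₂ => ?_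
  have hm₁ := Finset.mem_range.mp h₁
  have hm₂ := Finset.mem_range.mp h₂
  have e1 : ν - (ν - ν₁ - ν₂) - ν₁ = ν₂ := by omega
  rw [e1, complConfluent_eq c l₁ ν₁ hx₁, complConfluent_eq c l₂ ν₂ hx₂]
  ring
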